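/- Let A = (a_0, …, a_m) be real numbers with characteristic polynomial P_A(x) = Σ_{i=0}^m a_i x^{m−i} such that P_A has a real root ω with |ω| > 1 and P_A(ω⁻¹) ≠ 0. Then for every ε > 0 there exists n_0 such that for all n ≥ n_0, the A-Chebyshev polynomial T_{n,A}(x) = Σ_{i=0}^m a_i T_{n−i}(x) has a complex root ξ with |ξ − (ω + ω⁻¹)/2| < ε. -/

import Mathlib

open Polynomial Polynomial.Chebyshev Finset

lemma T_eval_half_add_inv (z : ℂ) (hz : z ≠ 0) (k : ℤ) :
    (Chebyshev.T ℂ k).eval ((z + z⁻¹) / 2) = (z ^ k + (z ^ k)⁻¹) / 2 := by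
  have h : ∀ c : ℂ, (c * (-Complex.I * Complex.log z)) * Complex.I = c * Complex.log z := by
    intro c; linear_combination (-c * Complex.log z) * Complex.I_mul_I
  have h1 : (-Complex.I * Complex.log z) * Complex.I = Complex.log z := by
    have := h 1; simpa using this
  have hcos : Complex.cos (-Complex.I * Complex.log z) = (z + z⁻¹) / 2 := by
    simp only [Complex.cos, neg_mul (-Complex.I * Complex.log z), h1, Complex.exp_neg,
      Complex.exp_log hz]
  rw [← hcos, Polynomial.Chebyshev.T_complex_cos]
  simp only [Complex.cos]
  rw [show ((k : ℂ) * (-Complex.I * Complex.log z)) * Complex.I = (k : ℂ) * Complex.log z from h k]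
  rw [show -((k : ℂ) * (-Complex.I * Complex.log z)) * Complex.I
      = -((k : ℂ) * Complex.log z) by linear_combination (((k : ℂ)) * Complex.log z) * Complex.I_mul_I]
  rw [Complex.exp_neg, Complex.exp_int_mul, Complex.exp_log hz]

theorem aChebyshev_root_near_salem_point (m : ℕ) (a : ℕ → ℝ) (ω : ℝ) (hω : 1 < |ω|)
    (hroot : ∑ i ∈ range (m + 1), a i * ω ^ (m - i) = 0)
    (hinv : ∑ i ∈ range (m + 1), a i * ω⁻¹ ^ (m - i) ≠ 0)
    (ε : ℝ) (hε : 0 < ε) :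
    ∃ n₀ : ℕ, ∀ n ≥ n₀, ∃ ξ : ℂ,
      (∑ i ∈ range (m + 1), (a i : ℂ) * (Chebyshev.T ℂ ((n : ℤ) - i)).eval ξ) = 0 ∧
        ‖ξ - (((ω + ω⁻¹) / 2 : ℝ) : ℂ)‖ < ε := by
  have hω0 : ω ≠ 0 := by
    intro h; rw [h] at hω; simp at hω; linarith
  have hωabs : (1 : ℝ) < |ω| := hω
  -- the two polynomials
  set P : ℂ[X] := ∑ i ∈ range (m + 1), Polynomial.C ((a i : ℂ)) * Polynomial.X ^ (m - i) with hPdef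
  set Q : ℂ[X] := ∑ i ∈ range (m + 1), Polynomial.C ((a i : ℂ)) * Polynomial.X ^ i with hQdef
  have hPeval : ∀ z : ℂ, P.eval z = ∑ i ∈ range (m + 1), (a i : ℂ) * z ^ (m - i) := by
    intro z; simp [hPdef, eval_finset_sum]
  have hQeval : ∀ z : ℂ, Q.eval z = ∑ i ∈ range (m + 1), (a i : ℂ) * z ^ i := by
    intro z; simp [hQdef, eval_finset_sum]
  have hPω : P.eval (ω : ℂ) = 0 := by
    have : ((∑ i ∈ range (m + 1), a i * ω ^ (m - i) : ℝ) : ℂ) = 0 := by rw [hroot]; simp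
    push_cast at this
    rw [hPeval]; exact this
  have hPinvC : P.eval ((ω : ℂ))⁻¹ ≠ 0 := by
    have : ((∑ i ∈ range (m + 1), a i * ω⁻¹ ^ (m - i) : ℝ) : ℂ) ≠ 0 :=
      Complex.ofReal_ne_zero.mpr hinv
    push_cast at this
    rw [hPeval]; exact this
  have hP0 : P ≠ 0 := by
    intro h; exact hPinvC (by rw [h, Polynomial.eval_zero])
  -- choose δ₁ avoiding roots of P other than ω
  set S : Set ℂ := (P.roots.toFinset : Set ℂ) \ {(ω : ℂ)} with hSdef
  have hSfin : S.Finite := Set.Finite.diff (P.roots.toFinset.finite_toSet)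
  have hωS : (ω : ℂ) ∈ Sᶜ := by simp [hSdef]
  obtain ⟨δ₁, hδ₁, hball⟩ := Metric.isOpen_iff.mp hSfin.isClosed.isOpen_compl _ hωS
  -- choose δ
  have hωgt : (0 : ℝ) < |ω| - 1 := by linarith
  set δ : ℝ := min (δ₁ / 2) (min (ε / 2) ((|ω| - 1) / 2)) with hδdef
  have hδ : 0 < δ := lt_min (by linarith) (lt_min (by linarith) (by linarith))
  have hδδ₁ : δ < δ₁ := lt_of_le_of_lt (min_le_left _ _) (by linarith)
  have hδε : δ < ε := lt_of_le_of_lt (le_trans (min_le_right _ _) (min_le_left _ _)) (by linarith)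
  have hδω : δ ≤ (|ω| - 1) / 2 := le_trans (min_le_right _ _) (min_le_right _ _)
  set ρ : ℝ := (|ω| + 1) / 2 with hρdef
  have hρ1 : 1 < ρ := by rw [hρdef]; linarith
  have hωnorm : ‖(ω : ℂ)‖ = |ω| := Complex.norm_real ω
  have hlow : ∀ z ∈ Metric.closedBall (ω : ℂ) δ, ρ ≤ ‖z‖ := by
    intro z hz
    have h1 : dist z (ω : ℂ) ≤ δ := Metric.mem_closedBall.mp hz
    have h2 : ‖(ω : ℂ)‖ - ‖z‖ ≤ ‖(ω : ℂ) - z‖ := norm_sub_norm_le _ _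
    have h3 : ‖(ω : ℂ) - z‖ = dist z (ω : ℂ) := by rw [dist_eq_norm, norm_sub_rev]
    rw [hωnorm] at h2
    rw [h3] at h2
    rw [hρdef]; linarith
  -- min of ‖P.eval‖ on the sphere
  obtain ⟨z₀, hz₀s, hz₀min⟩ := (isCompact_sphere (ω : ℂ) δ).exists_isMinOn
    (NormedSpace.sphere_nonempty.mpr hδ.le) ((P.continuous).norm.continuousOn)
  set c : ℝ := ‖P.eval z₀‖ with hcdef
  have hsphere_ne : ∀ z ∈ Metric.sphere (ω : ℂ) δ, P.eval z ≠ 0 := by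
    intro z hz hz0
    have hzω : z ≠ (ω : ℂ) := by
      intro h; rw [Metric.mem_sphere, h, dist_self] at hz; exact hδ.ne hz
    have hzb : z ∈ Metric.ball (ω : ℂ) δ₁ := by
      rw [Metric.mem_ball]; rw [Metric.mem_sphere] at hz; rw [hz]; exact hδδ₁
    have := hball hzb
    rw [Set.mem_compl_iff, hSdef] at this
    apply this
    refine ⟨?_, hzω⟩
    simp only [Multiset.mem_toFinset, Finset.coe_sort_coe, Finset.mem_coe]
    exact (Polynomial.mem_roots hP0).mpr hz0
  have hc : 0 < c := norm_pos_iff.mpr (hsphere_ne z₀ hz₀s)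
  have hmin : ∀ z ∈ Metric.sphere (ω : ℂ) δ, c ≤ ‖P.eval z‖ := fun z hz => hz₀min hz
  -- max of ‖Q.eval‖ on the closed ball
  obtain ⟨w₀, hw₀, hw₀max⟩ := (isCompact_closedBall (ω : ℂ) δ).exists_isMaxOn
    ⟨(ω : ℂ), Metric.mem_closedBall_self hδ.le⟩ ((Q.continuous).norm.continuousOn)
  set M : ℝ := ‖Q.eval w₀‖ with hMdef
  have hM0 : 0 ≤ M := norm_nonneg _
  have hQle : ∀ z ∈ Metric.closedBall (ω : ℂ) δ, ‖Q.eval z‖ ≤ M := fun z hz => hw₀max hz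
  -- choose n₀
  obtain ⟨j₀, hj₀⟩ := Filter.eventually_atTop.mp
    ((tendsto_pow_atTop_atTop_of_one_lt hρ1).eventually_ge_atTop (2 * M / c + 1))
  refine ⟨m + 1 + j₀, fun n hn => ?_⟩
  have hnm : m ≤ n := by omega
  have hjbig : j₀ ≤ 2 * n - m := by omega
  -- smallness bound
  have hsmall : ∀ z ∈ Metric.closedBall (ω : ℂ) δ,
      ‖(z⁻¹) ^ (2 * n - m) * Q.eval z‖ < c / 2 := by
    intro z hz
    have hzρ := hlow z hz
    have hz0 : z ≠ 0 := by
      intro h; rw [h, norm_zero] at hzρ; linarith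
    have hρj : 2 * M / c + 1 ≤ ρ ^ (2 * n - m) := hj₀ _ hjbig
    have hρpos : (0 : ℝ) < ρ := by linarith
    have hρjpos : (0 : ℝ) < ρ ^ (2 * n - m) := pow_pos hρpos _
    have hinvle : ‖z⁻¹‖ ≤ ρ⁻¹ := by
      rw [norm_inv]
      exact inv_anti₀ hρpos hzρ
    have h1 : ‖(z⁻¹) ^ (2 * n - m) * Q.eval z‖ ≤ ρ⁻¹ ^ (2 * n - m) * M := by
      rw [norm_mul, norm_pow]
      exact mul_le_mul (pow_le_pow_left₀ (norm_nonneg _) hinvle _) (hQle z hz)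
        (norm_nonneg _) (by positivity)
    have h2 : ρ⁻¹ ^ (2 * n - m) * M = M / ρ ^ (2 * n - m) := by
      rw [inv_pow]; ring
    have h3 : M / ρ ^ (2 * n - m) < c / 2 := by
      rw [div_lt_iff₀ hρjpos]
      have h4 : c / 2 * (2 * M / c + 1) = M + c / 2 := by field_simp
      nlinarith [mul_le_mul_of_nonneg_left hρj (by linarith : (0 : ℝ) ≤ c / 2)]
    linarith [h1, h2 ▸ h1]
  -- existence of a root of the perturbed function
  have hex : ∃ z ∈ Metric.closedBall (ω : ℂ) δ,
      P.eval z + (z⁻¹) ^ (2 * n - m) * Q.eval z = 0 := by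
    by_contra hcon
    push_neg at hcon
    have hGdiff : DifferentiableOn ℂ
        (fun z : ℂ => (P.eval z + (z⁻¹) ^ (2 * n - m) * Q.eval z)⁻¹)
        (Metric.closedBall (ω : ℂ) δ) := by
      apply DifferentiableOn.inv
      · intro z hz
        apply DifferentiableAt.differentiableWithinAt
        have hz0 : z ≠ 0 := by
          have := hlow z hz; intro h; rw [h, norm_zero] at this; linarith
        exact (P.differentiable.differentiableAt).add
          (((differentiableAt_id.inv hz0).pow _).mul Q.differentiable.differentiableAt)
      · exact hcon
    have hdc : DiffContOnCl ℂ (fun z : ℂ => (P.eval z + (z⁻¹) ^ (2 * n - m) * Q.eval z)⁻¹)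
        (Metric.ball (ω : ℂ) δ) := by
      apply DifferentiableOn.diffContOnCl
      rwa [closure_ball _ hδ.ne']
    have hfront : ∀ z ∈ frontier (Metric.ball (ω : ℂ) δ),
        ‖(P.eval z + (z⁻¹) ^ (2 * n - m) * Q.eval z)⁻¹‖ ≤ (c / 2)⁻¹ := by
      intro z hz
      rw [frontier_ball _ hδ.ne'] at hz
      have hzcb : z ∈ Metric.closedBall (ω : ℂ) δ := Metric.sphere_subset_closedBall hz
      have h1 : c ≤ ‖P.eval z‖ := hmin z hz
      have h2 : ‖(z⁻¹) ^ (2 * n - m) * Q.eval z‖ < c / 2 := hsmall z hzcb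
      have h4 := norm_add_le (P.eval z + (z⁻¹) ^ (2 * n - m) * Q.eval z)
        (-((z⁻¹) ^ (2 * n - m) * Q.eval z))
      rw [add_neg_cancel_right, norm_neg] at h4
      have h5 : c / 2 ≤ ‖P.eval z + (z⁻¹) ^ (2 * n - m) * Q.eval z‖ := by linarith
      rw [norm_inv]
      exact inv_anti₀ (by linarith) h5
    have hb := Complex.norm_le_of_forall_mem_frontier_norm_le Metric.isBounded_ball hdc hfront
      (show (ω : ℂ) ∈ closure (Metric.ball (ω : ℂ) δ) by
        rw [closure_ball _ hδ.ne']; exact Metric.mem_closedBall_self hδ.le)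
    rw [norm_inv] at hb
    have hGω0 : P.eval (ω : ℂ) + ((ω : ℂ)⁻¹) ^ (2 * n - m) * Q.eval (ω : ℂ) ≠ 0 :=
      hcon _ (Metric.mem_closedBall_self hδ.le)
    have hpos : 0 < ‖P.eval (ω : ℂ) + ((ω : ℂ)⁻¹) ^ (2 * n - m) * Q.eval (ω : ℂ)‖ :=
      norm_pos_iff.mpr hGω0
    have hge : c / 2 ≤ ‖P.eval (ω : ℂ) + ((ω : ℂ)⁻¹) ^ (2 * n - m) * Q.eval (ω : ℂ)‖ := by
      have hc2 : (0 : ℝ) < c / 2 := by linarith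
      by_contra hlt
      push_neg at hlt
      have := inv_strictAnti₀ hpos hlt
      linarith
    have hGωsmall : ‖P.eval (ω : ℂ) + ((ω : ℂ)⁻¹) ^ (2 * n - m) * Q.eval (ω : ℂ)‖ < c / 2 := by
      rw [hPω, zero_add]
      exact hsmall _ (Metric.mem_closedBall_self hδ.le)
    linarith
  obtain ⟨z, hzcb, hGz⟩ := hex
  have hzρ := hlow z hzcb
  have hz0 : z ≠ 0 := by
    intro h; rw [h, norm_zero] at hzρ; linarith
  refine ⟨(z + z⁻¹) / 2, ?_, ?_⟩
  · -- the root equation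
    have key : 2 * z ^ n * (∑ i ∈ range (m + 1),
        (a i : ℂ) * (Chebyshev.T ℂ ((n : ℤ) - i)).eval ((z + z⁻¹) / 2))
        = z ^ (2 * n - m) * P.eval z + Q.eval z := by
      rw [Finset.mul_sum, hPeval, hQeval, Finset.mul_sum, ← Finset.sum_add_distrib]
      apply Finset.sum_congr rfl
      intro i hi
      rw [Finset.mem_range] at hi
      have him : i ≤ m := by omega
      have hin : i ≤ n := by omega
      have hcast : (n : ℤ) - i = ((n - i : ℕ) : ℤ) := by
        rw [Int.natCast_sub hin]
      rw [hcast, T_eval_half_add_inv z hz0, zpow_natCast]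
      have e1 : z ^ (2 * n - m) * z ^ (m - i) = z ^ n * z ^ (n - i) := by
        rw [← pow_add, ← pow_add]; congr 1; omega
      have e2 : z ^ n * (z ^ (n - i))⁻¹ = z ^ i := by
        have h6 : z ^ n = z ^ i * z ^ (n - i) := by rw [← pow_add]; congr 1; omega
        rw [h6, mul_assoc, mul_inv_cancel₀ (pow_ne_zero _ hz0), mul_one]
      linear_combination (a i : ℂ) * e1.symm + (a i : ℂ) * e2
    have hone : z ^ (2 * n - m) * (z⁻¹) ^ (2 * n - m) = 1 := by
      rw [← mul_pow, mul_inv_cancel₀ hz0, one_pow]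
    have hzero : z ^ (2 * n - m) * P.eval z + Q.eval z = 0 := by
      linear_combination z ^ (2 * n - m) * hGz - Q.eval z * hone
    have h2z : (2 * z ^ n : ℂ) ≠ 0 := mul_ne_zero two_ne_zero (pow_ne_zero _ hz0)
    have := key.trans hzero
    exact (mul_eq_zero.mp this).resolve_left h2z
  · -- the distance estimate
    have hωC : (ω : ℂ) ≠ 0 := Complex.ofReal_ne_zero.mpr hω0
    have hsub : (z + z⁻¹) / 2 - (((ω + ω⁻¹) / 2 : ℝ) : ℂ)
        = ((z - (ω : ℂ)) + (z⁻¹ - ((ω : ℂ))⁻¹)) / 2 := by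
      push_cast
      ring
    have hd1 : ‖z - (ω : ℂ)‖ ≤ δ := by
      rw [← dist_eq_norm]; exact Metric.mem_closedBall.mp hzcb
    have hd2 : ‖z⁻¹ - ((ω : ℂ))⁻¹‖ ≤ δ := by
      have e : z⁻¹ - ((ω : ℂ))⁻¹ = ((ω : ℂ) - z) * z⁻¹ * ((ω : ℂ))⁻¹ := by
        field_simp
      rw [e, norm_mul, norm_mul, norm_inv, norm_inv, hωnorm]
      have hz1 : (1 : ℝ) ≤ ‖z‖ := by linarith
      have hinv1 : ‖z‖⁻¹ ≤ 1 := by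
        rw [inv_le_one_iff₀]; right; exact hz1
      have hinv2 : |ω|⁻¹ ≤ 1 := by
        rw [inv_le_one_iff₀]; right; linarith
      have hnrev : ‖(ω : ℂ) - z‖ ≤ δ := by rwa [norm_sub_rev]
      calc ‖(ω : ℂ) - z‖ * ‖z‖⁻¹ * |ω|⁻¹ ≤ δ * 1 * 1 := by
            apply mul_le_mul
            · exact mul_le_mul hnrev hinv1 (by positivity) hδ.le
            · exact hinv2
            · positivity
            · positivity
        _ = δ := by ring
    rw [hsub]
    calc ‖((z - (ω : ℂ)) + (z⁻¹ - ((ω : ℂ))⁻¹)) / 2‖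
        ≤ (‖z - (ω : ℂ)‖ + ‖z⁻¹ - ((ω : ℂ))⁻¹‖) / 2 := by
          rw [norm_div]
          simp only [Complex.norm_ofNat]
          apply div_le_div_of_nonneg_right ?_ ?_ |>.trans_eq rfl
          · exact norm_add_le _ _
          · norm_num
      _ ≤ (δ + δ) / 2 := by linarith
      _ = δ := by ring
      _ < ε := hδε
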